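/- Let (G,·) be an S-loop with S-subgroup (H,·) and let f,g∈H. Then the Smarandache f,g-principal isotope (G,∘), defined by x∘y = xR_g⁻¹ · yL_f⁻¹, is itself an S-loop: H is closed under ∘ and (H,∘) is a nontrivial proper subgroup of the loop (G,∘). -/

import Mathlib

/-- A loop: a quasigroup with a two-sided identity element. -/
structure Loop (G : Type*) where
  mul : G → G → G
  e : G
  one_mul : ∀ x, mul e x = x
  mul_one : ∀ x, mul x e = x
  exU_right : ∀ a b, ∃! x, mul a x = b
  exU_left : ∀ a b, ∃! y, mul y a = b

namespace Loop

variable {G : Type*}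

theorem mulRight_bijective (L : Loop G) (a : G) :
    Function.Bijective (fun y => L.mul y a) := by
  constructor
  · intro x y hxy
    obtain ⟨z, hz, huniq⟩ := L.exU_left a (L.mul x a)
    exact (huniq x rfl).trans (huniq y (by simpa using hxy.symm)).symm
  · intro b
    obtain ⟨z, hz, -⟩ := L.exU_left a b
    exact ⟨z, hz⟩

theorem mulLeft_bijective (L : Loop G) (a : G) :
    Function.Bijective (fun y => L.mul a y) := by
  constructor
  · intro x y hxy
    obtain ⟨z, hz, huniq⟩ := L.exU_right a (L.mul a x)
    exact (huniq x rfl).trans (huniq y (by simpa using hxy.symm)).symm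
  · intro b
    obtain ⟨z, hz, -⟩ := L.exU_right a b
    exact ⟨z, hz⟩

/-- The right translation `R_a : y ↦ y · a`, as a permutation of `G`. -/
noncomputable def Rt (L : Loop G) (a : G) : Equiv.Perm G :=
  Equiv.ofBijective _ (L.mulRight_bijective a)

/-- The left translation `L_a : y ↦ a · y`, as a permutation of `G`. -/
noncomputable def Lt (L : Loop G) (a : G) : Equiv.Perm G :=
  Equiv.ofBijective _ (L.mulLeft_bijective a)

/-- `(U, V, W)` is an autotopism of `L` iff `xU · yV = (x·y)W` for all `x, y`. -/
def IsAutotopism (L : Loop G) (U V W : Equiv.Perm G) : Prop :=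
  ∀ x y, L.mul (U x) (V y) = W (L.mul x y)

/-- The set of autotopism triples of a loop. -/
def AUTset (L : Loop G) : Set (Equiv.Perm G × Equiv.Perm G × Equiv.Perm G) :=
  {T | L.IsAutotopism T.1 T.2.1 T.2.2}

/-- The Bryant–Schneider set: all special maps of the loop. -/
def BSset (L : Loop G) : Set (Equiv.Perm G) :=
  {θ | ∃ f g : G, L.IsAutotopism (θ.trans (L.Rt g)⁻¹) (θ.trans (L.Lt f)⁻¹) θ}

/-- `SSYM`: the bijections of `G` mapping `H` into itself. -/
def SSYMset (H : Set G) : Set (Equiv.Perm G) :=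
  {θ | ∀ h ∈ H, θ h ∈ H}

/-- The Smarandache Bryant–Schneider set relative to the S-subgroup `H`. -/
def SBSset (L : Loop G) (H : Set G) : Set (Equiv.Perm G) :=
  {θ | (∀ h ∈ H, θ h ∈ H) ∧
    ∃ f ∈ H, ∃ g ∈ H, L.IsAutotopism (θ.trans (L.Rt g)⁻¹) (θ.trans (L.Lt f)⁻¹) θ}

/-- `H` is an S-subgroup of the loop `L`: a nontrivial proper subgroup. -/
structure IsSSubgroup (L : Loop G) (H : Set G) : Prop where
  nontrivial : ∃ a ∈ H, a ≠ L.e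
  proper : H ≠ Set.univ
  one_mem : L.e ∈ H
  mul_mem : ∀ a ∈ H, ∀ b ∈ H, L.mul a b ∈ H
  inv_mem : ∀ a ∈ H, ∃ b ∈ H, L.mul a b = L.e ∧ L.mul b a = L.e
  mul_assoc : ∀ a ∈ H, ∀ b ∈ H, ∀ c ∈ H, L.mul (L.mul a b) c = L.mul a (L.mul b c)

/-- The multiplication `x ∘ y = xR_g⁻¹ · yL_f⁻¹` of the `f,g`-principal isotope. -/
noncomputable def isoMul (L : Loop G) (f g : G) (x y : G) : G :=
  L.mul ((L.Rt g)⁻¹ x) ((L.Lt f)⁻¹ y)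

/-- The middle nucleus `N_μ` of a loop. -/
def middleNucleus (L : Loop G) : Set G :=
  {g | ∀ x y, L.mul x (L.mul g y) = L.mul (L.mul x g) y}

/-- `Ω(G,·)`: autotopisms of the form `(θR_g⁻¹, θL_f⁻¹, θ)` with `f, g ∈ H` and
`θ` mapping `H` into itself. -/
def OmegaSet (L : Loop G) (H : Set G) :
    Set (Equiv.Perm G × Equiv.Perm G × Equiv.Perm G) :=
  {T | (∀ h ∈ H, T.2.2 h ∈ H) ∧
    ∃ f ∈ H, ∃ g ∈ H, T.1 = T.2.2.trans (L.Rt g)⁻¹ ∧ T.2.1 = T.2.2.trans (L.Lt f)⁻¹ ∧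
      L.IsAutotopism T.1 T.2.1 T.2.2}

/-- The Smarandache automorphism set `SA(G,·)` relative to `H`. -/
def SAset (L : Loop G) (H : Set G) : Set (Equiv.Perm G) :=
  {θ | (∀ h ∈ H, θ h ∈ H) ∧ ∀ x y, θ (L.mul x y) = L.mul (θ x) (θ y)}

/-- `θ` is an S-isomorphism from `(L, H)` onto `(M, H')`. -/
def IsSIso (L M : Loop G) (H H' : Set G) (θ : Equiv.Perm G) : Prop :=
  (∀ h ∈ H, θ h ∈ H') ∧ ∀ x y, θ (L.mul x y) = M.mul (θ x) (θ y)

/-- `Θ(G,·)`: the pairs `(f,g) ∈ H × H` such that the Smarandache `f,g`-principal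
isotope of `L` is S-isomorphic to `L`. -/
def ThetaSet (L : Loop G) (H : Set G) : Set (G × G) :=
  {p | p.1 ∈ H ∧ p.2 ∈ H ∧
    ∃ M : Loop G, M.mul = L.isoMul p.1 p.2 ∧ ∃ θ : Equiv.Perm G, IsSIso M L H H θ}

/-- A GS-loop: an S-loop that is S-isomorphic to every S-loop isotope of itself. -/
def IsGSLoop (L : Loop G) (H : Set G) : Prop :=
  ∀ M : Loop G,
    (∃ U V W : Equiv.Perm G, ∀ x y, M.mul (U x) (V y) = W (L.mul x y)) →
    (∃ H' : Set G, M.IsSSubgroup H') →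
    ∃ H' : Set G, M.IsSSubgroup H' ∧ ∃ θ : Equiv.Perm G, IsSIso L M H H' θ

end Loop

namespace Loop

variable {G : Type*}

theorem Rt_inv_cancel (L : Loop G) (a x : G) : L.mul ((L.Rt a)⁻¹ x) a = x :=
  (L.Rt a).apply_symm_apply x

theorem Lt_inv_cancel (L : Loop G) (a x : G) : L.mul a ((L.Lt a)⁻¹ x) = x :=
  (L.Lt a).apply_symm_apply x

theorem Rt_inv_eq (L : Loop G) {a x y : G} (h : L.mul y a = x) : (L.Rt a)⁻¹ x = y := by
  apply (L.Rt a).injective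
  show L.mul ((L.Rt a)⁻¹ x) a = L.mul y a
  rw [L.Rt_inv_cancel, h]

theorem Lt_inv_eq (L : Loop G) {a x y : G} (h : L.mul a y = x) : (L.Lt a)⁻¹ x = y := by
  apply (L.Lt a).injective
  show L.mul a ((L.Lt a)⁻¹ x) = L.mul a y
  rw [L.Lt_inv_cancel, h]

/-- The `f,g`-principal isotope as a loop. -/
noncomputable def isoLoop (L : Loop G) (f g : G) : Loop G where
  mul := L.isoMul f g
  e := L.mul f g
  one_mul x := by
    show L.mul ((L.Rt g)⁻¹ (L.mul f g)) ((L.Lt f)⁻¹ x) = x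
    rw [L.Rt_inv_eq rfl]; exact L.Lt_inv_cancel f x
  mul_one x := by
    show L.mul ((L.Rt g)⁻¹ x) ((L.Lt f)⁻¹ (L.mul f g)) = x
    rw [L.Lt_inv_eq rfl]; exact L.Rt_inv_cancel g x
  exU_right a b := by
    obtain ⟨t, ht, hu⟩ := L.exU_right ((L.Rt g)⁻¹ a) b
    refine ⟨L.Lt f t, ?_, ?_⟩
    · show L.mul ((L.Rt g)⁻¹ a) ((L.Lt f)⁻¹ (L.Lt f t)) = b
      rw [Equiv.Perm.inv_def (L.Lt f), Equiv.symm_apply_apply]; exact ht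
    · intro y hy
      have h1 : (L.Lt f)⁻¹ y = t := hu _ hy
      have := congrArg (L.Lt f) h1
      rwa [Equiv.Perm.inv_def, Equiv.apply_symm_apply] at this
  exU_left a b := by
    obtain ⟨t, ht, hu⟩ := L.exU_left ((L.Lt f)⁻¹ a) b
    refine ⟨L.Rt g t, ?_, ?_⟩
    · show L.mul ((L.Rt g)⁻¹ (L.Rt g t)) ((L.Lt f)⁻¹ a) = b
      rw [Equiv.Perm.inv_def (L.Rt g), Equiv.symm_apply_apply]; exact ht
    · intro y hy
      have h1 : (L.Rt g)⁻¹ y = t := hu _ hy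
      have := congrArg (L.Rt g) h1
      rwa [Equiv.Perm.inv_def, Equiv.apply_symm_apply] at this

/-- The group structure on an S-subgroup. -/
noncomputable def sGroup (L : Loop G) (H : Set G) (hH : L.IsSSubgroup H) :
    Group {x : G // x ∈ H} where
  mul a b := ⟨L.mul a b, hH.mul_mem _ a.2 _ b.2⟩
  one := ⟨L.e, hH.one_mem⟩
  inv a := ⟨(hH.inv_mem a a.2).choose, (hH.inv_mem a a.2).choose_spec.1⟩
  mul_assoc a b c := Subtype.ext (hH.mul_assoc _ a.2 _ b.2 _ c.2)
  one_mul a := Subtype.ext (L.one_mul a)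
  mul_one a := Subtype.ext (L.mul_one a)
  inv_mul_cancel a := Subtype.ext (hH.inv_mem a a.2).choose_spec.2.2

end Loop
/-- Let `(G,·)` be an S-loop with S-subgroup `(H,·)` and let
`f, g ∈ H`. Then the Smarandache `f,g`-principal isotope `(G,∘)`, defined by
`x ∘ y = xR_g⁻¹ · yL_f⁻¹`, is itself an S-loop: `H` is closed under `∘` and
`(H,∘)` is a nontrivial proper subgroup of the loop `(G,∘)`. -/
theorem smarandache_principal_isotope_isSLoop {G : Type*} (L : Loop G) (H : Set G)
    (hH : L.IsSSubgroup H) (f g : G) (hf : f ∈ H) (hg : g ∈ H) :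
    (∃ M : Loop G, M.mul = L.isoMul f g) ∧
      ∀ M : Loop G, M.mul = L.isoMul f g → M.IsSSubgroup H := by
  letI : Group {x : G // x ∈ H} := L.sGroup H hH
  have mul_coe : ∀ a b : {x : G // x ∈ H},
      ((a * b : {x : G // x ∈ H}) : G) = L.mul a b := fun _ _ => rfl
  set F : {x : G // x ∈ H} := ⟨f, hf⟩
  set Gg : {x : G // x ∈ H} := ⟨g, hg⟩
  -- isoMul on H in terms of the group structure
  have iso_coe : ∀ a b : {x : G // x ∈ H}, L.isoMul f g (a : G) (b : G) = ((a * Gg⁻¹ * (F⁻¹ * b) :) : G) := by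
    intro a b
    have h1 : (L.Rt g)⁻¹ (a : G) = ((a * Gg⁻¹ :) : G) := by
      apply L.Rt_inv_eq
      show ((a * Gg⁻¹ * Gg :) : G) = (a : G)
      rw [inv_mul_cancel_right]
    have h2 : (L.Lt f)⁻¹ (b : G) = ((F⁻¹ * b :) : G) := by
      apply L.Lt_inv_eq
      show ((F * (F⁻¹ * b) :) : G) = (b : G)
      rw [mul_inv_cancel_left]
    show L.mul ((L.Rt g)⁻¹ (a : G)) ((L.Lt f)⁻¹ (b : G)) = _
    rw [h1, h2]; rfl
  refine ⟨⟨L.isoLoop f g, rfl⟩, ?_⟩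
  intro M hM
  -- identity of M is f·g
  have hE : M.e = L.mul f g := by
    have h1 : M.mul M.e (L.mul f g) = L.mul f g := M.one_mul _
    have h2 : M.mul M.e (L.mul f g) = M.e := by
      rw [hM]
      show L.mul ((L.Rt g)⁻¹ M.e) ((L.Lt f)⁻¹ (L.mul f g)) = M.e
      rw [L.Lt_inv_eq rfl]; exact L.Rt_inv_cancel g M.e
    rw [← h2, h1]
  have hfg_coe : L.mul f g = ((F * Gg :) : G) := rfl
  constructor
  · -- nontrivial
    obtain ⟨a, haH, hane⟩ := hH.nontrivial
    by_cases h : L.e = M.e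
    · exact ⟨a, haH, fun hc => hane (hc.trans h.symm)⟩
    · exact ⟨L.e, hH.one_mem, fun hc => h hc⟩
  · exact hH.proper
  · rw [hE]; exact hH.mul_mem _ hf _ hg
  · intro a ha b hb
    rw [hM, show a = ((⟨a, ha⟩ : {x : G // x ∈ H}) : G) from rfl, show b = ((⟨b, hb⟩ : {x : G // x ∈ H}) : G) from rfl,
      iso_coe]
    exact Subtype.coe_prop _
  · intro a ha
    let A : {x : G // x ∈ H} := ⟨a, ha⟩
    refine ⟨((F * Gg * A⁻¹ * F * Gg :) : G), Subtype.coe_prop _, ?_, ?_⟩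
    · rw [hM, hE, show a = (A : G) from rfl, iso_coe, hfg_coe]
      exact congrArg _ (by group)
    · rw [hM, hE, show a = (A : G) from rfl, iso_coe, hfg_coe]
      exact congrArg _ (by group)
  · intro a ha b hb c hc
    let A : {x : G // x ∈ H} := ⟨a, ha⟩
    let B : {x : G // x ∈ H} := ⟨b, hb⟩
    let C : {x : G // x ∈ H} := ⟨c, hc⟩
    rw [hM, show a = (A : G) from rfl, show b = (B : G) from rfl, show c = (C : G) from rfl,
      iso_coe, iso_coe, iso_coe, iso_coe]
    exact congrArg _ (by group)
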